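/- arXiv:1810.05876 — 2 statements merged into one kernel-verified Lean document; each statement's English description precedes it below -/
import Mathlib

section
/- Let n ≥ 1 and fix 1 ≤ j ≤ n. Then for every real x, the Lagrange basis polynomial at the shifted Jacobi–Gauss nodes satisfies ℓ_j(x) = Σ_{k=1}^{n} λ̂_{jk} · P_{k−1}^{(1,1)}(2x−1), where λ̂_{jk} := [(2k+1)(k+1)/k] · ŵ_j · P_{k−1}^{(1,1)}(2ξ̂_j−1). -/
open Real MeasureTheory intervalIntegral Finset

/-- Jacobi polynomial `P_n^{(a,b)}(τ)` for natural index `n` (general real parameters). -/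
noncomputable def jacobiPNat (n : ℕ) (a b τ : ℝ) : ℝ :=
  (1 / 2 ^ n) * ∑ k ∈ Finset.range (n + 1),
    (Real.Gamma ((n : ℝ) + a + 1) / (Real.Gamma ((k : ℝ) + a + 1) * (Nat.factorial (n - k) : ℝ))) *
    (Real.Gamma ((n : ℝ) + b + 1) / (Real.Gamma (((n - k : ℕ) : ℝ) + b + 1) * (Nat.factorial k : ℝ))) *
    (τ - 1) ^ k * (τ + 1) ^ (n - k)

/-- Jacobi polynomial with integer index, with the convention `P_{-1}^{(a,b)} = 0`. -/
noncomputable def jacobiP (m : ℤ) (a b τ : ℝ) : ℝ :=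
  if 0 ≤ m then jacobiPNat m.toNat a b τ else 0

/-- Left Riemann--Liouville fractional derivative of order `α` (for `1 < α < 2`):
`(₀D_x^α g)(x) = (1/Γ(2−α)) (d²/dx²) ∫_0^x (x−s)^{1−α} g(s) ds`. -/
noncomputable def leftRL (α : ℝ) (g : ℝ → ℝ) (x : ℝ) : ℝ :=
  (1 / Real.Gamma (2 - α)) *
    deriv (deriv (fun t : ℝ => ∫ s in (0:ℝ)..t, (t - s) ^ (1 - α) * g s)) x

/-- Right Riemann--Liouville fractional derivative of order `α` (for `1 < α < 2`):
`(ₓD_1^α g)(x) = (1/Γ(2−α)) (d²/dx²) ∫_x^1 (s−x)^{1−α} g(s) ds`. -/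
noncomputable def rightRL (α : ℝ) (g : ℝ → ℝ) (x : ℝ) : ℝ :=
  (1 / Real.Gamma (2 - α)) *
    deriv (deriv (fun t : ℝ => ∫ s in t..(1:ℝ), (s - t) ^ (1 - α) * g s)) x

/-- The function `ζ_k` appearing in the fractional differentiation matrices. -/
noncomputable def zeta (β : ℝ) (k : ℕ) (x : ℝ) : ℝ :=
  Real.Gamma ((k : ℝ) + 1) / Real.Gamma ((k : ℝ) - 1 + β) * x ^ (β - 1) *
      jacobiP ((k : ℤ) - 1) (3 - β) (β - 1) (2 * x - 1)
    - Real.Gamma ((k : ℝ) + 2) / Real.Gamma ((k : ℝ) + β) * (((k : ℝ) + 2) / (2 * (k : ℝ) + 1)) *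
        x ^ β * jacobiP ((k : ℤ) - 1) (3 - β) β (2 * x - 1)
    - Real.Gamma ((k : ℝ) + 1) / Real.Gamma ((k : ℝ) - 1 + β) * ((k : ℝ) / (2 * (k : ℝ) + 1)) *
        x ^ β * jacobiP ((k : ℤ) - 2) (3 - β) β (2 * x - 1)

/-! ### Auxiliary development -/

open Polynomial

section Aux

/-- Beta function values at natural arguments. -/
lemma betaNat (b : ℕ) : ∀ a : ℕ, ∫ x in (0:ℝ)..1, x ^ a * (1 - x) ^ b
    = (Nat.factorial a : ℝ) * (Nat.factorial b) / (Nat.factorial (a + b + 1)) := by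
  induction b with
  | zero =>
    intro a
    simp [integral_pow, Nat.factorial_succ]
    rw [eq_div_iff (by positivity)]
    push_cast
    field_simp
  | succ b ih =>
    intro a
    have hu : ∀ x ∈ Set.uIcc (0:ℝ) 1, HasDerivAt (fun x : ℝ => (1 - x) ^ (b+1))
        (-((b+1) * (1 - x) ^ b)) x := by
      intro x _
      have h1 : HasDerivAt (fun x : ℝ => 1 - x) (-1) x := by
        simpa using (hasDerivAt_id x).const_sub 1
      have := h1.fun_pow (b+1)
      simpa [mul_comm, mul_assoc, mul_left_comm] using this
    have hv : ∀ x ∈ Set.uIcc (0:ℝ) 1, HasDerivAt (fun x : ℝ => x ^ (a+1) / (a+1)) (x ^ a) x := by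
      intro x _
      have h := (hasDerivAt_pow (a+1) x).div_const ((a:ℝ)+1)
      have e : ((a:ℝ)+1) * x ^ (a+1-1) / ((a:ℝ)+1) = x ^ a := by
        field_simp
        simp
      rw [show ((a+1 : ℕ):ℝ) = (a:ℝ)+1 by push_cast; ring] at h
      exact e ▸ h
    have hiu : IntervalIntegrable (fun x : ℝ => -((b+1) * (1 - x) ^ b)) MeasureTheory.volume 0 1 :=
      (Continuous.intervalIntegrable (by continuity) 0 1)
    have hiv : IntervalIntegrable (fun x : ℝ => x ^ a) MeasureTheory.volume 0 1 :=
      (Continuous.intervalIntegrable (by continuity) 0 1)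
    have H := integral_mul_deriv_eq_deriv_mul hu hv hiu hiv
    have h2 : (∫ x in (0:ℝ)..1, (1 - x) ^ (b+1) * x ^ a)
        = ((b:ℝ)+1)/((a:ℝ)+1) * ∫ x in (0:ℝ)..1, x ^ (a+1) * (1 - x) ^ b := by
      rw [H]
      rw [← intervalIntegral.integral_const_mul]
      simp only [one_pow, sub_self, zero_pow, ne_eq, Nat.succ_ne_zero, not_false_eq_true,
        zero_mul, sub_zero, mul_zero, zero_div, zero_sub, ← intervalIntegral.integral_neg]
      congr 1
      ext x
      field_simp
    have h3 : (∫ x in (0:ℝ)..1, x ^ a * (1 - x) ^ (b+1))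
        = ∫ x in (0:ℝ)..1, (1 - x) ^ (b+1) * x ^ a := by
      congr 1; ext x; ring
    rw [h3, h2, ih (a+1), show a + (b+1) + 1 = a+1+b+1 by omega]
    have hfab : (Nat.factorial (a + 1 + b + 1) : ℝ) ≠ 0 := by positivity
    field_simp
    push_cast [Nat.factorial_succ]
    ring

lemma coeff_comp_add_one (p : Polynomial ℝ) (m : ℕ) (hp : p.natDegree ≤ m + 1) :
    (p.comp (X + C 1)).coeff m = p.coeff m + (m + 1) * p.coeff (m+1) := by
  have ht : p.comp (X + C 1) = taylor 1 p := rfl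
  rw [ht, Polynomial.taylor_coeff]
  have hd : (Polynomial.hasseDeriv m p).natDegree ≤ 1 := by
    refine le_trans (Polynomial.natDegree_hasseDeriv_le p m) (by omega)
  rw [Polynomial.eval_eq_sum_range' (lt_of_le_of_lt hd (by norm_num : (1:ℕ) < 2))]
  rw [Finset.sum_range_succ, Finset.sum_range_one]
  rw [Polynomial.hasseDeriv_coeff, Polynomial.hasseDeriv_coeff]
  simp [Nat.choose_succ_self_right, Nat.succ_add]

lemma alt_sum_succ (m : ℕ) (g : ℕ → ℝ) :
    ∑ k ∈ range (m+2), (-1:ℝ)^k * ((m+1).choose k) * g k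
    = ∑ k ∈ range (m+1), (-1:ℝ)^k * (m.choose k) * (g k - g (k+1)) := by
  have key : ∑ k ∈ range (m+1), (-1:ℝ)^(k+1) * (m.choose (k+1)) * g (k+1)
      = ∑ k ∈ range (m+1), (-1:ℝ)^k * (m.choose k) * g k - g 0 := by
    have h0 : ∑ k ∈ range (m+1), (-1:ℝ)^(k+1) * (m.choose (k+1)) * g (k+1)
        = ∑ k ∈ range m, (-1:ℝ)^(k+1) * (m.choose (k+1)) * g (k+1) := by
      rw [Finset.sum_range_succ]
      simp
    rw [h0, Finset.sum_range_succ' (fun k => (-1:ℝ)^k * (m.choose k) * g k) m]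
    simp
  rw [Finset.sum_range_succ' (fun k => (-1:ℝ)^k * ((m+1).choose k) * g k) (m+1)]
  have expand : ∀ k, (-1:ℝ)^(k+1) * ((m+1).choose (k+1)) * g (k+1)
      = -((-1:ℝ)^k * (m.choose k) * g (k+1)) + (-1:ℝ)^(k+1) * (m.choose (k+1)) * g (k+1) := by
    intro k
    rw [Nat.choose_succ_succ]
    push_cast
    ring
  rw [Finset.sum_congr rfl (fun k _ => expand k), Finset.sum_add_distrib, key]
  simp only [mul_sub, Finset.sum_sub_distrib, Finset.sum_neg_distrib]
  simp
  ring

lemma finite_diff (m : ℕ) : ∀ p : Polynomial ℝ, p.natDegree ≤ m →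
    ∑ k ∈ range (m+1), (-1:ℝ)^k * (m.choose k) * p.eval (k : ℝ)
    = (-1:ℝ)^m * (m.factorial) * p.coeff m := by
  induction m with
  | zero =>
    intro p hp
    have : p = C (p.coeff 0) := Polynomial.eq_C_of_natDegree_le_zero hp
    rw [this]
    simp
  | succ m ih =>
    intro p hp
    set q : Polynomial ℝ := p - p.comp (X + C 1) with hq
    have hqeval : ∀ k : ℕ, q.eval (k:ℝ) = p.eval (k:ℝ) - p.eval ((k:ℝ)+1) := by
      intro k; simp [hq]
    have hqcoeffm1 : q.coeff (m+1) = 0 := by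
      have hc := coeff_comp_add_one p (m+1) (by omega)
      have : p.coeff (m+1+1) = 0 := Polynomial.coeff_eq_zero_of_natDegree_lt (by omega)
      rw [hq, Polynomial.coeff_sub, hc, this]
      push_cast
      ring
    have hqdeg : q.natDegree ≤ m := by
      rw [Polynomial.natDegree_le_iff_coeff_eq_zero]
      intro i hi
      rcases eq_or_lt_of_le (Nat.succ_le_of_lt hi) with h | h
      · rw [← h]; exact hqcoeffm1
      · have h1 : p.natDegree < i := by omega
        have h2 : (p.comp (X + C 1)).natDegree < i := by
          refine lt_of_le_of_lt ?_ h1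
          refine le_trans (Polynomial.natDegree_comp_le) ?_
          rw [Polynomial.natDegree_X_add_C, mul_one]
        rw [hq, Polynomial.coeff_sub, Polynomial.coeff_eq_zero_of_natDegree_lt h1,
          Polynomial.coeff_eq_zero_of_natDegree_lt h2, sub_zero]
    have hqcoeff : q.coeff m = -((m+1) * p.coeff (m+1)) := by
      rw [hq, Polynomial.coeff_sub, coeff_comp_add_one p m hp]
      ring
    have := alt_sum_succ m (fun k => p.eval (k:ℝ))
    rw [show m+1+1 = m+2 by rfl, this]
    have heq : ∀ k ∈ range (m+1), (-1:ℝ)^k * (m.choose k) * (p.eval (k:ℝ) - p.eval (((k+1:ℕ)):ℝ))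
        = (-1:ℝ)^k * (m.choose k) * q.eval (k:ℝ) := by
      intro k _
      rw [hqeval k]
      push_cast
      ring
    rw [Finset.sum_congr rfl heq, ih q hqdeg, hqcoeff]
    push_cast [Nat.factorial_succ]
    ring

/-- Coefficients of the shifted Jacobi polynomial. -/
noncomputable def Bc (m k : ℕ) : ℝ :=
  ((m+1).factorial : ℝ)^2 /
    ((k+1).factorial * (m-k).factorial * (m-k+1).factorial * k.factorial)

lemma Bc_pos (m k : ℕ) : 0 < Bc m k := by
  unfold Bc; positivity

/-- The shifted Jacobi polynomial `P_m^{(1,1)}(2x-1)` as a `Polynomial ℝ`. -/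
noncomputable def JP (m : ℕ) : Polynomial ℝ :=
  ∑ k ∈ range (m+1), Polynomial.C (Bc m k) * (X - Polynomial.C 1)^k * X^(m-k)

lemma gamma_cast (j : ℕ) : Real.Gamma ((j:ℝ) + 1 + 1) = ((j+1).factorial : ℝ) := by
  rw [show ((j:ℝ) + 1 + 1) = (((j+1:ℕ)):ℝ) + 1 by push_cast; ring,
    Real.Gamma_nat_eq_factorial]

lemma JP_eval (m : ℕ) (x : ℝ) : (JP m).eval x = jacobiPNat m 1 1 (2*x - 1) := by
  rw [jacobiPNat, JP, Finset.mul_sum]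
  rw [Polynomial.eval_finset_sum]
  refine Finset.sum_congr rfl ?_
  intro k hk
  rw [Finset.mem_range] at hk
  have hkm : k ≤ m := by omega
  simp only [Polynomial.eval_mul, Polynomial.eval_pow, Polynomial.eval_sub, Polynomial.eval_X,
    Polynomial.eval_C, Polynomial.eval_one]
  rw [gamma_cast m, gamma_cast k, gamma_cast (m-k)]
  rw [show (2*x - 1 - 1) = 2*(x-1) by ring, show (2*x - 1 + 1) = 2*x by ring,
    mul_pow, mul_pow]
  rw [Bc]
  have h2 : (2:ℝ)^k * (2:ℝ)^(m-k) = 2^m := by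
    rw [← pow_add]
    congr 1
    omega
  have hne : ∀ j : ℕ, ((j.factorial : ℝ)) ≠ 0 := fun j => by positivity
  field_simp
  ring_nf
  rw [← h2]
  ring

lemma JP_natDegree_le (m : ℕ) : (JP m).natDegree ≤ m := by
  refine Polynomial.natDegree_sum_le_of_forall_le _ _ ?_
  intro k hk
  rw [Finset.mem_range] at hk
  calc (Polynomial.C (Bc m k) * (X - Polynomial.C 1)^k * X^(m-k)).natDegree
      ≤ (Polynomial.C (Bc m k) * (X - Polynomial.C 1)^k).natDegree + (X^(m-k) : Polynomial ℝ).natDegree :=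
        Polynomial.natDegree_mul_le
    _ ≤ ((Polynomial.C (Bc m k)).natDegree + ((X - Polynomial.C 1 : Polynomial ℝ)^k).natDegree) + (m-k) := by
        gcongr
        · exact Polynomial.natDegree_mul_le
        · exact le_of_eq (Polynomial.natDegree_X_pow _)
    _ ≤ (0 + k) + (m-k) := by
        gcongr
        · exact le_of_eq (Polynomial.natDegree_C _)
        · calc ((X - Polynomial.C 1 : Polynomial ℝ)^k).natDegree
              ≤ k * (X - Polynomial.C 1 : Polynomial ℝ).natDegree := Polynomial.natDegree_pow_le
            _ ≤ k := by rw [Polynomial.natDegree_X_sub_C]; omega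
    _ ≤ m := by omega

lemma JP_coeff_top (m : ℕ) : (JP m).coeff m = ∑ k ∈ range (m+1), Bc m k := by
  rw [JP, Polynomial.finset_sum_coeff]
  refine Finset.sum_congr rfl ?_
  intro k hk
  rw [Finset.mem_range] at hk
  have hkm : k ≤ m := by omega
  have hmon : ((X - Polynomial.C 1)^k * X^(m-k) : Polynomial ℝ).Monic :=
    ((Polynomial.monic_X_sub_C 1).pow k).mul (Polynomial.monic_X_pow _)
  have hdeg : ((X - Polynomial.C 1)^k * X^(m-k) : Polynomial ℝ).natDegree = m := by
    rw [((Polynomial.monic_X_sub_C (1:ℝ)).pow k).natDegree_mul (Polynomial.monic_X_pow _),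
      Polynomial.natDegree_pow, Polynomial.natDegree_X_sub_C, Polynomial.natDegree_X_pow]
    omega
  have : (Polynomial.C (Bc m k) * (X - Polynomial.C 1)^k * X^(m-k) : Polynomial ℝ)
      = Polynomial.C (Bc m k) * ((X - Polynomial.C 1)^k * X^(m-k)) := by ring
  rw [this, Polynomial.coeff_C_mul]
  have hc : ((X - Polynomial.C 1)^k * X^(m-k) : Polynomial ℝ).coeff m = 1 := by
    have h := hmon.coeff_natDegree
    rw [hdeg] at h
    exact h
  rw [hc, mul_one]

lemma sum_Bc_pos (m : ℕ) : 0 < ∑ k ∈ range (m+1), Bc m k :=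
  Finset.sum_pos (fun k _ => Bc_pos m k) (by simp)

lemma Bc_eq_choose (m k : ℕ) (hk : k ≤ m) :
    Bc m k = ((m+1).choose (k+1) : ℝ) * ((m+1).choose k : ℝ) := by
  rw [Nat.cast_choose ℝ (by omega : k+1 ≤ m+1), Nat.cast_choose ℝ (by omega : k ≤ m+1)]
  rw [show (m+1) - (k+1) = m - k by omega, show (m+1) - k = m - k + 1 by omega]
  rw [Bc]
  have hne : ∀ j : ℕ, ((j.factorial : ℝ)) ≠ 0 := fun j => by positivity
  field_simp

lemma sum_Bc (m : ℕ) : ∑ k ∈ range (m+1), Bc m k = ((2*m+2).choose m : ℝ) := by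
  have hnat : ∑ k ∈ range (m+1), (m+1).choose (k+1) * (m+1).choose k = (2*m+2).choose m := by
    have hsym : ∀ k ∈ range (m+1), (m+1).choose (k+1) * (m+1).choose k
        = (m+1).choose k * (m+1).choose (m - k) := by
      intro k hk
      rw [Finset.mem_range] at hk
      rw [show m - k = (m+1) - (k+1) by omega, Nat.choose_symm (by omega : k+1 ≤ m+1)]
      ring
    rw [Finset.sum_congr rfl hsym]
    have := Nat.add_choose_eq (m+1) (m+1) m
    rw [show (m+1)+(m+1) = 2*m+2 by omega] at this
    rw [this, ← Finset.Nat.sum_antidiagonal_eq_sum_range_succ_mk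
      (fun p => (m+1).choose p.1 * (m+1).choose p.2)]
  calc ∑ k ∈ range (m+1), Bc m k
      = ∑ k ∈ range (m+1), (((m+1).choose (k+1) * (m+1).choose k : ℕ) : ℝ) := by
        refine Finset.sum_congr rfl ?_
        intro k hk
        rw [Finset.mem_range] at hk
        rw [Bc_eq_choose m k (by omega)]
        push_cast
        ring
    _ = ((2*m+2).choose m : ℝ) := by rw [← Nat.cast_sum, hnat]

/-- The weighted integral functional. -/
noncomputable def Jw (p : Polynomial ℝ) : ℝ := ∫ x in (0:ℝ)..1, x*(1-x)*p.eval x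

lemma Jw_cont (p : Polynomial ℝ) : Continuous (fun x : ℝ => x*(1-x)*p.eval x) :=
  (continuous_id'.mul (continuous_const.sub continuous_id')).mul p.continuous

lemma Jw_add (p q : Polynomial ℝ) : Jw (p + q) = Jw p + Jw q := by
  unfold Jw
  rw [← integral_add ((Jw_cont p).intervalIntegrable 0 1) ((Jw_cont q).intervalIntegrable 0 1)]
  congr 1
  ext x
  simp [Polynomial.eval_add]
  ring

lemma Jw_Cmul (c : ℝ) (p : Polynomial ℝ) : Jw (Polynomial.C c * p) = c * Jw p := by
  unfold Jw
  rw [← intervalIntegral.integral_const_mul]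
  congr 1
  ext x
  simp
  ring

lemma Jw_sub (p q : Polynomial ℝ) : Jw (p - q) = Jw p - Jw q := by
  have : p - q = p + Polynomial.C (-1) * q := by
    rw [map_neg, map_one]
    ring
  rw [this, Jw_add, Jw_Cmul]
  ring

lemma Jw_sum {ι : Type*} (s : Finset ι) (f : ι → Polynomial ℝ) :
    Jw (∑ i ∈ s, f i) = ∑ i ∈ s, Jw (f i) := by
  induction s using Finset.cons_induction with
  | empty => simp [Jw]
  | cons a s ha ih => rw [Finset.sum_cons, Jw_add, ih, Finset.sum_cons]

lemma Jw_mono (k s : ℕ) : Jw ((X - Polynomial.C 1)^k * X^s)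
    = (-1:ℝ)^k * ((s+1).factorial * (k+1).factorial) / ((s+k+3).factorial) := by
  unfold Jw
  have hcong : ∀ x : ℝ, x*(1-x)*(((X - Polynomial.C 1)^k * X^s : Polynomial ℝ).eval x)
      = (-1:ℝ)^k * (x^(s+1) * (1-x)^(k+1)) := by
    intro x
    simp only [Polynomial.eval_mul, Polynomial.eval_pow, Polynomial.eval_sub, Polynomial.eval_X,
      Polynomial.eval_C]
    rw [show (x - 1) = -(1-x) by ring, neg_pow]
    ring
  rw [intervalIntegral.integral_congr (fun x _ => hcong x), intervalIntegral.integral_const_mul,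
    betaNat (k+1) (s+1)]
  rw [show (s+1) + (k+1) + 1 = s + k + 3 by omega]
  ring

lemma prod_shift (i : ℕ) : ∀ d : ℕ, ∏ t ∈ range i, ((d:ℝ)+2+t)
    = ((d+i+1).factorial : ℝ) / ((d+1).factorial) := by
  induction i with
  | zero =>
    intro d
    simp [div_self (show ((d+1).factorial:ℝ) ≠ 0 by positivity)]
  | succ i ih =>
    intro d
    rw [Finset.prod_range_succ, ih d]
    have h1 : (d+(i+1)+1).factorial = (d+i+2) * (d+i+1).factorial := by
      rw [show d+(i+1)+1 = (d+i+1)+1 by omega, Nat.factorial_succ]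
    rw [h1]
    have h2 : ((d+1).factorial : ℝ) ≠ 0 := by positivity
    push_cast
    field_simp
    ring

noncomputable def pI (m i : ℕ) : Polynomial ℝ :=
  Polynomial.C ((-1:ℝ)^i) * ∏ t ∈ range i, (X - Polynomial.C ((m:ℝ)+2+t))

lemma pI_natDegree_le (m i : ℕ) : (pI m i).natDegree ≤ i := by
  rw [pI]
  refine le_trans (Polynomial.natDegree_mul_le) ?_
  rw [Polynomial.natDegree_C, zero_add]
  refine le_trans (Polynomial.natDegree_prod_le (range i) (fun t => X - Polynomial.C ((m:ℝ)+2+t))) ?_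
  have h1 : ∑ t ∈ range i, (X - Polynomial.C ((m:ℝ)+2+(t:ℕ))).natDegree = ∑ _t ∈ range i, 1 :=
    Finset.sum_congr rfl (fun t _ => Polynomial.natDegree_X_sub_C ((m:ℝ)+2+t))
  rw [h1, Finset.sum_const, Finset.card_range, smul_eq_mul, mul_one]

lemma pI_coeff_self (m i : ℕ) : (pI m i).coeff i = (-1:ℝ)^i := by
  rw [pI, Polynomial.coeff_C_mul]
  have hmon : (∏ t ∈ range i, (X - Polynomial.C ((m:ℝ)+2+t))).Monic :=
    Polynomial.monic_prod_of_monic _ _ (fun t _ => Polynomial.monic_X_sub_C _)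
  have hdeg : (∏ t ∈ range i, (X - Polynomial.C ((m:ℝ)+2+t))).natDegree = i := by
    rw [Polynomial.natDegree_prod _ _ (fun t _ => Polynomial.X_sub_C_ne_zero _)]
    have : ∑ t ∈ range i, (X - Polynomial.C ((m:ℝ)+2+t)).natDegree = ∑ _t ∈ range i, 1 :=
      Finset.sum_congr rfl (fun t _ => Polynomial.natDegree_X_sub_C _)
    rw [this]
    simp
  have h := hmon.coeff_natDegree
  rw [hdeg] at h
  rw [h, mul_one]

lemma pI_eval (m i k : ℕ) (hk : k ≤ m) :
    (pI m i).eval (k:ℝ) = ((m-k+i+1).factorial : ℝ) / ((m-k+1).factorial) := by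
  rw [pI, Polynomial.eval_mul, Polynomial.eval_C, Polynomial.eval_prod]
  have : ∀ t ∈ range i, ((X - Polynomial.C ((m:ℝ)+2+t)).eval (k:ℝ))
      = (-1) * (((m-k:ℕ):ℝ)+2+t) := by
    intro t _
    simp only [Polynomial.eval_sub, Polynomial.eval_X, Polynomial.eval_C]
    have : ((m-k:ℕ):ℝ) = (m:ℝ) - k := by
      push_cast [Nat.cast_sub hk]
      ring
    rw [this]
    ring
  rw [Finset.prod_congr rfl this, Finset.prod_mul_distrib, Finset.prod_const,
    prod_shift i (m-k)]
  rw [Finset.card_range, ← mul_assoc, ← mul_pow]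
  norm_num

lemma Jw_JP_pow (m i : ℕ) (hi : i ≤ m) :
    Jw (JP m * X^i)
    = ((m+1).factorial : ℝ)^2 / (((m+i+3).factorial : ℝ) * (m.factorial : ℝ))
      * ((-1:ℝ)^m * (m.factorial : ℝ) * (pI m i).coeff m) := by
  have hexp : JP m * X^i
      = ∑ k ∈ range (m+1), Polynomial.C (Bc m k) * ((X - Polynomial.C 1)^k * X^(m-k+i)) := by
    rw [JP, Finset.sum_mul]
    refine Finset.sum_congr rfl fun k hk => ?_
    rw [mul_assoc, mul_assoc, ← pow_add]
  rw [hexp, Jw_sum]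
  have hterm : ∀ k ∈ range (m+1),
      Jw (Polynomial.C (Bc m k) * ((X - Polynomial.C 1)^k * X^(m-k+i)))
      = ((m+1).factorial : ℝ)^2 / (((m+i+3).factorial : ℝ) * (m.factorial : ℝ))
        * ((-1:ℝ)^k * (m.choose k) * (pI m i).eval (k:ℝ)) := by
    intro k hk
    rw [Finset.mem_range] at hk
    have hkm : k ≤ m := by omega
    rw [Jw_Cmul, Jw_mono k (m-k+i)]
    rw [show m-k+i+k+3 = m+i+3 by omega]
    rw [pI_eval m i k hkm, Nat.cast_choose ℝ (by omega : k ≤ m), Bc]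
    have hne : ∀ j : ℕ, ((j.factorial : ℝ)) ≠ 0 := fun j => by positivity
    field_simp
  rw [Finset.sum_congr rfl hterm, ← Finset.mul_sum,
    finite_diff m (pI m i) (le_trans (pI_natDegree_le m i) hi)]

lemma Jw_JP_pow_lt (m i : ℕ) (hi : i < m) : Jw (JP m * X^i) = 0 := by
  rw [Jw_JP_pow m i (le_of_lt hi),
    Polynomial.coeff_eq_zero_of_natDegree_lt (lt_of_le_of_lt (pI_natDegree_le m i) hi)]
  ring

lemma Jw_JP_pow_self (m : ℕ) :
    Jw (JP m * X^m) = ((m+1).factorial : ℝ)^2 / ((2*m+3).factorial : ℝ) := by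
  rw [Jw_JP_pow m m le_rfl, pI_coeff_self]
  have hm : ((m.factorial : ℝ)) ≠ 0 := by positivity
  rw [show m+m+3 = 2*m+3 by omega]
  have : ((-1:ℝ)^m * (m.factorial : ℝ) * (-1:ℝ)^m) = (m.factorial : ℝ) := by
    rw [mul_comm ((-1:ℝ)^m * (m.factorial : ℝ)) _, ← mul_assoc, ← mul_pow]
    norm_num
  rw [this]
  field_simp

lemma Jw_JP_orth (m : ℕ) (q : Polynomial ℝ) (hdeg : q.natDegree ≤ m) (hcm : q.coeff m = 0) :
    Jw (JP m * q) = 0 := by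
  have hq : q = ∑ i ∈ range (m+1), Polynomial.C (q.coeff i) * X^i := by
    conv_lhs => rw [Polynomial.as_sum_range' q (m+1) (Nat.lt_succ_of_le hdeg)]
    exact Finset.sum_congr rfl (fun i _ => (Polynomial.C_mul_X_pow_eq_monomial).symm)
  have hexp : JP m * q = ∑ i ∈ range (m+1), Polynomial.C (q.coeff i) * (JP m * X^i) := by
    conv_lhs => rw [hq]
    rw [Finset.mul_sum]
    exact Finset.sum_congr rfl (fun i _ => by ring)
  rw [hexp, Jw_sum]
  refine Finset.sum_eq_zero ?_
  intro i hi
  rw [Finset.mem_range] at hi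
  rw [Jw_Cmul]
  rcases eq_or_lt_of_le (Nat.lt_succ_iff.mp hi) with h | h
  · rw [h, hcm]; ring
  · rw [Jw_JP_pow_lt m i h]; ring

lemma Jw_JP_JP_lt (m m' : ℕ) (h : m' < m) : Jw (JP m * JP m') = 0 :=
  Jw_JP_orth m (JP m') (le_trans (JP_natDegree_le m') (le_of_lt h))
    (Polynomial.coeff_eq_zero_of_natDegree_lt (lt_of_le_of_lt (JP_natDegree_le m') h))

/-- normalization constant -/
noncomputable def gam (m : ℕ) : ℝ := ((m:ℝ)+1)/(((m:ℝ)+2)*(2*(m:ℝ)+3))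

lemma gam_pos (m : ℕ) : 0 < gam m := by
  unfold gam; positivity

lemma Jw_JP_JP_self (m : ℕ) : Jw (JP m * JP m) = gam m := by
  set L : ℝ := ∑ k ∈ range (m+1), Bc m k with hL
  have hcoeff : (JP m).coeff m = L := JP_coeff_top m
  set q : Polynomial ℝ := JP m - Polynomial.C L * X^m with hqdef
  have hq2 : JP m * JP m = JP m * q + Polynomial.C L * (JP m * X^m) := by
    rw [hqdef]; ring
  have hqdeg : q.natDegree ≤ m := by
    refine le_trans (Polynomial.natDegree_sub_le _ _) ?_
    refine max_le (JP_natDegree_le m) ?_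
    refine le_trans Polynomial.natDegree_mul_le ?_
    rw [Polynomial.natDegree_C, Polynomial.natDegree_X_pow]
    omega
  have hqcm : q.coeff m = 0 := by
    rw [hqdef, Polynomial.coeff_sub, hcoeff, Polynomial.coeff_C_mul, Polynomial.coeff_X_pow]
    simp
  rw [hq2, Jw_add, Jw_Cmul, Jw_JP_orth m q hqdeg hqcm, Jw_JP_pow_self m, zero_add]
  have hLval : L = ((2*m+2).choose m : ℝ) := sum_Bc m
  rw [hLval, Nat.cast_choose ℝ (by omega : m ≤ 2*m+2), show 2*m+2-m = m+2 by omega]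
  rw [gam]
  have e1 : ((2*m+3).factorial : ℝ) = (2*(m:ℝ)+3) * ((2*m+2).factorial : ℝ) := by
    rw [show 2*m+3 = (2*m+2)+1 by omega, Nat.factorial_succ]
    push_cast
    ring
  have e2 : ((m+2).factorial : ℝ) = ((m:ℝ)+2) * ((m+1).factorial : ℝ) := by
    rw [show m+2 = (m+1)+1 by omega, Nat.factorial_succ]
    push_cast
    ring
  have e3 : ((m+1).factorial : ℝ) = ((m:ℝ)+1) * (m.factorial : ℝ) := by
    rw [Nat.factorial_succ]
    push_cast
    ring
  rw [e1, e2, e3]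
  have h1 : ((2*m+2).factorial : ℝ) ≠ 0 := by positivity
  have h2 : ((m.factorial : ℝ)) ≠ 0 := by positivity
  field_simp

lemma Jw_JP_JP_ne (m m' : ℕ) (h : m ≠ m') : Jw (JP m * JP m') = 0 := by
  rcases lt_or_gt_of_ne h with h' | h'
  · rw [mul_comm]; exact Jw_JP_JP_lt m' m h'
  · exact Jw_JP_JP_lt m m' h'

/-- Every polynomial of degree ≤ d is a combination of `JP 0, …, JP d`. -/
lemma JP_span (d : ℕ) : ∀ p : Polynomial ℝ, p.natDegree ≤ d →
    ∃ a : ℕ → ℝ, p = ∑ m ∈ range (d+1), Polynomial.C (a m) * JP m := by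
  induction d with
  | zero =>
    intro p hp
    refine ⟨fun _ => p.coeff 0, ?_⟩
    have hJP0 : JP 0 = Polynomial.C 1 := by
      rw [JP]
      simp [Bc, Nat.factorial]
    rw [Finset.sum_range_one, hJP0, Polynomial.eq_C_of_natDegree_le_zero hp]
    simp
  | succ d ih =>
    intro p hp
    set L : ℝ := ∑ k ∈ range (d+1+1), Bc (d+1) k with hLdef
    have hLpos : 0 < L := sum_Bc_pos (d+1)
    set c : ℝ := p.coeff (d+1) / L with hcdef
    set q : Polynomial ℝ := p - Polynomial.C c * JP (d+1) with hqdef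
    have hqc : q.coeff (d+1) = 0 := by
      rw [hqdef, Polynomial.coeff_sub, Polynomial.coeff_C_mul, JP_coeff_top, ← hLdef, hcdef]
      field_simp
      simp
    have hqdeg : q.natDegree ≤ d := by
      rw [Polynomial.natDegree_le_iff_coeff_eq_zero]
      intro i hi
      rcases eq_or_lt_of_le (Nat.succ_le_of_lt hi) with h | h
      · rw [← h]; exact hqc
      · have h1 : p.natDegree < i := by omega
        have h2 : (Polynomial.C c * JP (d+1)).natDegree < i := by
          refine lt_of_le_of_lt (le_trans Polynomial.natDegree_mul_le ?_) (by omega : d+1 < i)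
          rw [Polynomial.natDegree_C, zero_add]
          exact JP_natDegree_le (d+1)
        rw [hqdef, Polynomial.coeff_sub, Polynomial.coeff_eq_zero_of_natDegree_lt h1,
          Polynomial.coeff_eq_zero_of_natDegree_lt h2, sub_zero]
    obtain ⟨a, ha⟩ := ih q hqdeg
    refine ⟨fun m => if m = d+1 then c else a m, ?_⟩
    rw [Finset.sum_range_succ]
    have hsum : ∑ m ∈ range (d+1), Polynomial.C (if m = d+1 then c else a m) * JP m
        = ∑ m ∈ range (d+1), Polynomial.C (a m) * JP m := by
      refine Finset.sum_congr rfl ?_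
      intro m hm
      rw [Finset.mem_range] at hm
      rw [if_neg (by omega)]
    rw [hsum, ← ha]
    have hc' : ((fun m => if m = d + 1 then c else a m) (d + 1)) = c := by simp
    rw [hc', hqdef]
    ring

lemma natDegree_lt_of_coeff_zero (p : Polynomial ℝ) (m : ℕ) (hm : 1 ≤ m)
    (h1 : p.natDegree ≤ m) (h2 : p.coeff m = 0) : p.natDegree < m := by
  rcases lt_or_eq_of_le h1 with h | h
  · exact h
  · have : p.leadingCoeff = 0 := by rw [Polynomial.leadingCoeff, h, h2]
    have hp0 : p = 0 := Polynomial.leadingCoeff_eq_zero.mp this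
    rw [hp0]
    simpa using Nat.lt_of_lt_of_le Nat.zero_lt_one hm

end Aux

/-- expansion of the Lagrange basis polynomial `ℓ_j` at the shifted
Jacobi--Gauss nodes in shifted Jacobi polynomials, with coefficients
`λ̂_{jk} = [(2k+1)(k+1)/k]·ŵ_j·P_{k−1}^{(1,1)}(2ξ̂_j−1)`. -/
theorem lagrange_basis_expansion (n : ℕ) (hn : 1 ≤ n) (ξ : Fin n → ℝ)
    (hξmem : ∀ i, ξ i ∈ Set.Ioo (-1 : ℝ) 1)
    (hξinj : Function.Injective ξ)
    (hξroot : ∀ i, jacobiPNat n 1 1 (ξ i) = 0)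
    (ξh : Fin n → ℝ) (hξh : ∀ i, ξh i = (ξ i + 1) / 2)
    (ℓ : Fin n → ℝ → ℝ)
    (hℓ : ∀ j x, ℓ j x = ∏ k ∈ Finset.univ.erase j, (x - ξh k) / (ξh j - ξh k))
    (w : Fin n → ℝ) (hw : ∀ j, w j = ∫ x in (0:ℝ)..1, x * (1 - x) * ℓ j x)
    (j : Fin n) (x : ℝ) :
    ℓ j x = ∑ k ∈ Finset.Icc 1 n,
      ((2 * (k : ℝ) + 1) * ((k : ℝ) + 1) / (k : ℝ)) * w j *
        jacobiP ((k : ℤ) - 1) 1 1 (2 * ξh j - 1) * jacobiP ((k : ℤ) - 1) 1 1 (2 * x - 1) := by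
  classical
  -- injectivity of the shifted nodes
  have hinj' : Function.Injective ξh := by
    intro a b hab
    apply hξinj
    rw [hξh a, hξh b] at hab
    linarith
  -- the Lagrange basis polynomial
  set Lp : Polynomial ℝ :=
    ∏ k ∈ Finset.univ.erase j, (Polynomial.C (ξh j - ξh k)⁻¹ * (X - Polynomial.C (ξh k)))
    with hLpdef
  have hLpeval : ∀ y : ℝ, Lp.eval y = ℓ j y := by
    intro y
    rw [hℓ j y, hLpdef, Polynomial.eval_prod]
    refine Finset.prod_congr rfl ?_
    intro k _
    simp only [Polynomial.eval_mul, Polynomial.eval_C, Polynomial.eval_sub, Polynomial.eval_X]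
    rw [div_eq_inv_mul]
  -- degree bound for Lp
  have hfac_deg : ∀ k : Fin n,
      (Polynomial.C (ξh j - ξh k)⁻¹ * (X - Polynomial.C (ξh k))).natDegree ≤ 1 := by
    intro k
    refine le_trans Polynomial.natDegree_mul_le ?_
    rw [Polynomial.natDegree_C, Polynomial.natDegree_X_sub_C]
  have hLpdeg : Lp.natDegree ≤ n - 1 := by
    rw [hLpdef]
    refine le_trans (Polynomial.natDegree_prod_le _ _) ?_
    refine le_trans (Finset.sum_le_sum (g := fun _ => 1) (fun k _ => hfac_deg k)) ?_
    rw [Finset.sum_const, smul_eq_mul, mul_one, Finset.card_erase_of_mem (Finset.mem_univ j),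
      Finset.card_univ, Fintype.card_fin]
  -- evaluations at the nodes
  have hLp_self : Lp.eval (ξh j) = 1 := by
    rw [hLpdef, Polynomial.eval_prod]
    refine Finset.prod_eq_one ?_
    intro k hk
    rw [Finset.mem_erase] at hk
    have hne : ξh j - ξh k ≠ 0 := sub_ne_zero.mpr (fun h => hk.1 (hinj' h).symm)
    simp only [Polynomial.eval_mul, Polynomial.eval_C, Polynomial.eval_sub, Polynomial.eval_X]
    exact inv_mul_cancel₀ hne
  have hLp_ne : ∀ i : Fin n, i ≠ j → Lp.eval (ξh i) = 0 := by
    intro i hij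
    rw [hLpdef, Polynomial.eval_prod]
    refine Finset.prod_eq_zero (Finset.mem_erase.mpr ⟨hij, Finset.mem_univ i⟩) ?_
    simp
  -- w j = Jw Lp
  have hwj : w j = Jw Lp := by
    rw [hw j, Jw]
    refine intervalIntegral.integral_congr ?_
    intro y _
    show y * (1 - y) * ℓ j y = y * (1 - y) * Lp.eval y
    rw [hLpeval y]
  -- the node polynomial
  set Nprod : Polynomial ℝ := ∏ i : Fin n, (X - Polynomial.C (ξh i)) with hNdef
  have hNmon : Nprod.Monic :=
    Polynomial.monic_prod_of_monic _ _ (fun i _ => Polynomial.monic_X_sub_C _)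
  have hNdeg : Nprod.natDegree = n := by
    rw [hNdef, Polynomial.natDegree_prod _ _ (fun i _ => Polynomial.X_sub_C_ne_zero _)]
    have : ∑ i : Fin n, (X - Polynomial.C (ξh i)).natDegree = ∑ _i : Fin n, 1 :=
      Finset.sum_congr rfl (fun i _ => Polynomial.natDegree_X_sub_C _)
    rw [this, Finset.sum_const, smul_eq_mul, mul_one, Finset.card_univ, Fintype.card_fin]
  have hNzero : Nprod ≠ 0 := hNmon.ne_zero
  -- node values are the shifted roots
  have hnode : ∀ i : Fin n, 2 * ξh i - 1 = ξ i := by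
    intro i
    rw [hξh i]
    ring
  -- JP n = C Ln * Nprod
  set Ln : ℝ := ∑ k ∈ range (n+1), Bc n k with hLndef
  have hLnpos : 0 < Ln := sum_Bc_pos n
  have hPn : JP n = Polynomial.C Ln * Nprod := by
    have hdiff : JP n - Polynomial.C Ln * Nprod = 0 := by
      refine Polynomial.eq_zero_of_natDegree_lt_card_of_eval_eq_zero _ hinj' ?_ ?_
      · intro i
        have h1 : (JP n).eval (ξh i) = 0 := by
          rw [JP_eval, hnode i]
          exact hξroot i
        have h2 : Nprod.eval (ξh i) = 0 := by
          rw [hNdef, Polynomial.eval_prod]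
          exact Finset.prod_eq_zero (Finset.mem_univ i) (by simp)
        simp [h1, h2]
      · rw [Fintype.card_fin]
        refine natDegree_lt_of_coeff_zero _ n hn ?_ ?_
        · refine le_trans (Polynomial.natDegree_sub_le _ _) ?_
          refine max_le (JP_natDegree_le n) ?_
          refine le_trans Polynomial.natDegree_mul_le ?_
          rw [Polynomial.natDegree_C, hNdeg]
          omega
        · rw [Polynomial.coeff_sub, JP_coeff_top, Polynomial.coeff_C_mul]
          have : Nprod.coeff n = 1 := by
            have h := hNmon.coeff_natDegree
            rw [hNdeg] at h
            exact h
          rw [this, mul_one, ← hLndef, sub_self]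
    have := sub_eq_zero.mp hdiff
    exact this
  have hNP : Nprod = Polynomial.C Ln⁻¹ * JP n := by
    rw [hPn, ← mul_assoc, ← Polynomial.C_mul, inv_mul_cancel₀ (ne_of_gt hLnpos), Polynomial.C_1,
      one_mul]
  -- quadrature: exactness for Lp * JP m, m < n
  have hquad : ∀ m : ℕ, m < n → Jw (Lp * JP m) = (JP m).eval (ξh j) * w j := by
    intro m hm
    set h : Polynomial ℝ := Lp * JP m - Polynomial.C ((JP m).eval (ξh j)) * Lp with hhdef
    have heval : ∀ i : Fin n, h.eval (ξh i) = 0 := by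
      intro i
      rcases eq_or_ne i j with rfl | hij
      · simp [hhdef, hLp_self]
      · simp [hhdef, hLp_ne i hij]
    have hdvd : Nprod ∣ h := by
      rw [hNdef]
      refine Finset.prod_dvd_of_coprime ?_ ?_
      · exact ((Polynomial.pairwise_coprime_X_sub_C hinj').set_pairwise _)
      · intro i _
        exact Polynomial.dvd_iff_isRoot.mpr (heval i)
    obtain ⟨q, hq⟩ := hdvd
    have hJwh : Jw h = 0 := by
      rcases eq_or_ne q 0 with rfl | hq0
      · rw [hq, mul_zero]
        simpa [Jw] using (by simp [Jw] : Jw 0 = 0)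
      · have hh0 : h ≠ 0 := by
          rw [hq]
          exact mul_ne_zero hNzero hq0
        have hhdeg : h.natDegree ≤ 2*n - 2 := by
          rw [hhdef]
          refine le_trans (Polynomial.natDegree_sub_le _ _) ?_
          refine max_le ?_ ?_
          · refine le_trans Polynomial.natDegree_mul_le ?_
            have := JP_natDegree_le m
            omega
          · refine le_trans Polynomial.natDegree_mul_le ?_
            rw [Polynomial.natDegree_C]
            omega
        have hmul : h.natDegree = n + q.natDegree := by
          rw [hq, Polynomial.natDegree_mul hNzero hq0, hNdeg]
        have hqdeg : q.natDegree < n := by omega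
        rw [hq, hNP, mul_assoc, Jw_Cmul, Jw_JP_orth n q (le_of_lt hqdeg)
          (Polynomial.coeff_eq_zero_of_natDegree_lt hqdeg), mul_zero]
    rw [hhdef, Jw_sub, Jw_Cmul, ← hwj] at hJwh
    linarith
  -- expansion of Lp in the JP basis
  obtain ⟨a, ha⟩ := JP_span (n-1) Lp hLpdeg
  rw [show n-1+1 = n by omega] at ha
  -- identification of the coefficients
  have hcoef : ∀ m : ℕ, m < n → a m * gam m = (JP m).eval (ξh j) * w j := by
    intro m hm
    have hexp : Lp * JP m = ∑ t ∈ range n, Polynomial.C (a t) * (JP t * JP m) := by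
      conv_lhs => rw [ha]
      rw [Finset.sum_mul]
      exact Finset.sum_congr rfl (fun t _ => by ring)
    have h1 : Jw (Lp * JP m) = a m * gam m := by
      rw [hexp, Jw_sum]
      rw [Finset.sum_eq_single m]
      · rw [Jw_Cmul, Jw_JP_JP_self]
      · intro t _ htm
        rw [Jw_Cmul, Jw_JP_JP_ne t m htm, mul_zero]
      · intro hmnot
        exact absurd (Finset.mem_range.mpr hm) hmnot
    rw [← h1, hquad m hm]
  -- final computation
  have hfin : ℓ j x = ∑ m ∈ range n, a m * (JP m).eval x := by
    rw [← hLpeval x]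
    conv_lhs => rw [ha]
    rw [Polynomial.eval_finset_sum]
    exact Finset.sum_congr rfl (fun m _ => by
      rw [Polynomial.eval_mul, Polynomial.eval_C])
  rw [hfin]
  rw [show Finset.Icc 1 n = Finset.Ico 1 (n+1) by rw [Finset.Ico_add_one_right_eq_Icc],
    Finset.sum_Ico_eq_sum_range]
  rw [show n + 1 - 1 = n by omega]
  refine (Finset.sum_congr rfl ?_).symm
  intro m hm
  rw [Finset.mem_range] at hm
  -- identify jacobiP with JP evaluations
  have hjac : ∀ y : ℝ, jacobiP (((1 + m : ℕ) : ℤ) - 1) 1 1 (2 * y - 1) = (JP m).eval y := by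
    intro y
    rw [jacobiP, if_pos (by omega : (0:ℤ) ≤ ((1 + m : ℕ) : ℤ) - 1)]
    have : (((1 + m : ℕ) : ℤ) - 1).toNat = m := by omega
    rw [this, JP_eval]
  rw [hjac (ξh j), hjac x]
  have hgam : gam m ≠ 0 := ne_of_gt (gam_pos m)
  have hc := hcoef m hm
  have ham : a m = ((JP m).eval (ξh j) * w j) / gam m := by
    field_simp at hc ⊢
    linarith
  rw [ham]
  rw [gam]
  have hcast : ((1 + m : ℕ) : ℝ) = (m : ℝ) + 1 := by push_cast; ring
  rw [hcast]
  have hm1 : ((m:ℝ) + 1) ≠ 0 := by positivity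
  field_simp
  ring
end

section
/- Let n ≥ 1, let ξ̂_1,…,ξ̂_n ∈ (0,1) be the shifted Jacobi–Gauss nodes (the zeros of x ↦ P_n^{(1,1)}(2x−1)), and let ŵ_j := ∫_0^1 x(1−x) ℓ_j(x) dx be the corresponding weights. Then for every real polynomial p of degree at most 2n−1, ∫_0^1 x(1−x) p(x) dx = Σ_{j=1}^{n} ŵ_j p(ξ̂_j). -/
open Real MeasureTheory intervalIntegral Finset

section QuadratureAux

open Real MeasureTheory intervalIntegral Finset Polynomial

lemma beta_nat : ∀ (b a : ℕ), ∫ x in (0:ℝ)..1, x ^ a * (1 - x) ^ b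
    = (a.factorial * b.factorial : ℝ) / ((a + b + 1).factorial) := by
  intro b
  induction b with
  | zero =>
    intro a
    simp only [pow_zero, mul_one, integral_pow, one_pow, zero_pow (Nat.succ_ne_zero a), sub_zero,
      Nat.add_zero, Nat.factorial_succ, Nat.factorial_zero, mul_one]
    have : (a.factorial : ℝ) ≠ 0 := by positivity
    push_cast
    rw [one_div, eq_div_iff (by positivity)]
    field_simp
  | succ b ih =>
    intro a
    have key : ∫ x in (0:ℝ)..1,
        ((a+1 : ℝ) * (x ^ a * (1 - x) ^ (b+1)) - (b+1 : ℝ) * (x ^ (a+1) * (1 - x) ^ b)) = 0 := by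
      have : ∀ x ∈ Set.uIcc (0:ℝ) 1, HasDerivAt (fun x : ℝ => x ^ (a+1) * (1 - x) ^ (b+1))
          ((a+1 : ℝ) * (x ^ a * (1 - x) ^ (b+1)) - (b+1 : ℝ) * (x ^ (a+1) * (1 - x) ^ b)) x := by
        intro x _
        have h1 : HasDerivAt (fun x : ℝ => x ^ (a+1)) ((a+1 : ℝ) * x ^ a) x := by
          simpa using hasDerivAt_pow (a+1) x
        have h2 : HasDerivAt (fun x : ℝ => (1 - x) ^ (b+1)) (-( (b+1 : ℝ) * (1 - x) ^ b)) x := by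
          have := ((hasDerivAt_pow (b+1) (1 - x)).comp x ((hasDerivAt_const x (1:ℝ)).sub (hasDerivAt_id x)))
          simpa [Function.comp_def] using this
        have := h1.mul h2
        exact this.congr_deriv (by ring)
      have hcont : IntervalIntegrable (fun x : ℝ =>
          (a+1 : ℝ) * (x ^ a * (1 - x) ^ (b+1)) - (b+1 : ℝ) * (x ^ (a+1) * (1 - x) ^ b))
          MeasureTheory.volume 0 1 := by
        apply Continuous.intervalIntegrable; continuity
      rw [intervalIntegral.integral_eq_sub_of_hasDerivAt this hcont]
      simp
    have hi1 : IntervalIntegrable (fun x : ℝ => x ^ a * (1 - x) ^ (b+1)) MeasureTheory.volume 0 1 := by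
      apply Continuous.intervalIntegrable; continuity
    have hi2 : IntervalIntegrable (fun x : ℝ => x ^ (a+1) * (1 - x) ^ b) MeasureTheory.volume 0 1 := by
      apply Continuous.intervalIntegrable; continuity
    rw [intervalIntegral.integral_sub ((hi1.const_mul _)) ((hi2.const_mul _)),
      intervalIntegral.integral_const_mul, intervalIntegral.integral_const_mul, sub_eq_zero] at key
    have ha : (a + 1 : ℝ) ≠ 0 := by positivity
    have : ∫ x in (0:ℝ)..1, x ^ a * (1 - x) ^ (b+1)
        = (b+1 : ℝ) / (a+1 : ℝ) * ∫ x in (0:ℝ)..1, x ^ (a+1) * (1 - x) ^ b := by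
      field_simp at key ⊢; linarith [key]
    rw [this, ih (a+1)]
    have h2 : ((a+1) + b + 1) = (a + (b+1) + 1) := by omega
    rw [h2]
    rw [Nat.factorial_succ (a), Nat.factorial_succ (b)]
    push_cast
    have : ((a + (b+1) + 1).factorial : ℝ) ≠ 0 := by positivity
    field_simp

lemma alt_step (n : ℕ) (f : ℕ → ℝ) :
    ∑ j ∈ range (n+2), (-1:ℝ)^j * ((n+1).choose j) * f j
    = - ∑ j ∈ range (n+1), (-1:ℝ)^j * (n.choose j) * (f (j+1) - f j) := by
  set S1 : ℝ := ∑ i ∈ range (n+1), (-1:ℝ)^i * (n.choose i) * f (i+1) with hS1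
  set S0 : ℝ := ∑ j ∈ range (n+1), (-1:ℝ)^j * (n.choose j) * f j with hS0
  set T : ℝ := ∑ i ∈ range (n+1), (-1:ℝ)^i * (n.choose (i+1)) * f (i+1) with hT
  have hrhs : - ∑ j ∈ range (n+1), (-1:ℝ)^j * (n.choose j) * (f (j+1) - f j) = S0 - S1 := by
    rw [hS0, hS1, ← Finset.sum_sub_distrib, ← Finset.sum_neg_distrib]
    congr 1; funext j; ring
  have hT' : T = ∑ i ∈ range n, (-1:ℝ)^i * (n.choose (i+1)) * f (i+1) := by
    rw [hT, Finset.sum_range_succ, Nat.choose_succ_self]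
    simp
  have hS0' : S0 = -T + f 0 := by
    rw [hS0, Finset.sum_range_succ' _ n, hT', ← Finset.sum_neg_distrib]
    simp only [pow_zero, Nat.choose_zero_right, Nat.cast_one, one_mul, mul_one]
    congr 1
    apply Finset.sum_congr rfl
    intro i _
    ring
  have hlhs : ∑ j ∈ range (n+2), (-1:ℝ)^j * ((n+1).choose j) * f j = -S1 - T + f 0 := by
    rw [Finset.sum_range_succ' _ (n+1), hS1, hT, ← Finset.sum_neg_distrib, ← Finset.sum_sub_distrib]
    simp only [pow_zero, Nat.choose_zero_right, Nat.cast_one, one_mul, mul_one]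
    congr 1
    apply Finset.sum_congr rfl
    intro i _
    rw [Nat.choose_succ_succ]
    push_cast
    ring
  rw [hlhs, hrhs]
  linarith [hS0']

lemma alt_sum_poly : ∀ n : ℕ, 1 ≤ n → ∀ P : Polynomial ℝ, P.degree < (n : ℕ) →
    ∑ j ∈ range (n+1), (-1:ℝ)^j * (n.choose j) * P.eval (j:ℝ) = 0 := by
  intro n
  induction n with
  | zero => omega
  | succ n ih =>
    intro _ P hP
    by_cases hn0 : n = 0
    · subst hn0
      have hP0 : P.degree ≤ 0 := Nat.WithBot.lt_one_iff_le_zero.mp (by exact_mod_cast hP)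
      rw [Polynomial.eq_C_of_degree_le_zero hP0]
      norm_num [Finset.sum_range_succ]
    · have hn : 1 ≤ n := Nat.one_le_iff_ne_zero.mpr hn0
      set Q : Polynomial ℝ := P.comp (X + C 1) - P with hQdef
      have hQeval : ∀ x : ℝ, Q.eval x = P.eval (x + 1) - P.eval x := by
        intro x; simp [hQdef, Polynomial.eval_comp]
      have hQdeg : Q.degree < (n : ℕ) := by
        rcases eq_or_ne P 0 with rfl | hP0
        · simpa [hQdef] using (by exact_mod_cast WithBot.bot_lt_coe n : (⊥ : WithBot ℕ) < ((n:ℕ) : WithBot ℕ))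
        · have hq1 : (X + C (1:ℝ)).natDegree = 1 := Polynomial.natDegree_X_add_C 1
          have hlc : (P.comp (X + C 1)).leadingCoeff = P.leadingCoeff := by
            rw [Polynomial.leadingCoeff_comp (by rw [hq1]; norm_num),
              (Polynomial.monic_X_add_C (1:ℝ)).leadingCoeff, one_pow, mul_one]
          have hcompne : P.comp (X + C 1) ≠ 0 := fun h => by
            rw [h] at hlc
            exact hP0 (Polynomial.leadingCoeff_eq_zero.mp (by simpa using hlc.symm))
          have hdegeq : (P.comp (X + C 1)).degree = P.degree := by
            rw [Polynomial.degree_eq_natDegree hcompne, Polynomial.degree_eq_natDegree hP0,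
              Polynomial.natDegree_comp, hq1, mul_one]
          have h1 : Q.degree < P.degree := hdegeq ▸ Polynomial.degree_sub_lt hdegeq hcompne hlc
          have h2 : P.degree ≤ (n : ℕ) := by
            have : P.degree < ((n : ℕ) : WithBot ℕ) + 1 := by
              exact_mod_cast (by push_cast at hP ⊢; exact_mod_cast hP : P.degree < ((n:ℕ) + 1 : ℕ))
            exact Polynomial.degree_le_of_natDegree_le (Nat.lt_succ_iff.mp ((Polynomial.natDegree_lt_iff_degree_lt hP0).mpr (by exact_mod_cast this)))
          exact lt_of_lt_of_le h1 h2
      have key := alt_step n (fun j => P.eval (j : ℝ))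
      have key2 : ∑ j ∈ range (n+1), (-1:ℝ)^j * (n.choose j) * ((fun j : ℕ => P.eval (j:ℝ)) (j+1) - (fun j : ℕ => P.eval (j:ℝ)) j)
          = ∑ j ∈ range (n+1), (-1:ℝ)^j * (n.choose j) * Q.eval (j:ℝ) := by
        apply Finset.sum_congr rfl
        intro j _
        rw [hQeval]
        push_cast
        ring_nf
      rw [show n + 1 + 1 = n + 2 from rfl] at *
      rw [key, key2, ih hn Q hQdeg, neg_zero]

lemma fact_ratio (a : ℕ) : ∀ m : ℕ, ((a+m+1).factorial : ℝ)
    = ((a+1).factorial : ℝ) * ∏ i ∈ range m, ((a:ℝ) + 2 + i) := by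
  intro m
  induction m with
  | zero => simp
  | succ m ih =>
    rw [Finset.prod_range_succ, ← mul_assoc, ← ih,
      show a + (m+1) + 1 = (a + m + 1) + 1 by omega, Nat.factorial_succ]
    push_cast
    ring

lemma comb_zero (n m : ℕ) (hn : 1 ≤ n) (hm : m < n) :
    ∑ k ∈ range (n+1), (-1:ℝ)^k * ((n-k+m+1).factorial : ℝ) /
      (((n-k).factorial : ℝ) * ((n-k+1).factorial : ℝ) * (k.factorial : ℝ)) = 0 := by
  set P : Polynomial ℝ := ∏ i ∈ range m, (Polynomial.C ((n:ℝ)+2+i) - Polynomial.X) with hP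
  have hdegP : P.degree = (m : ℕ) := by
    rw [hP, Polynomial.degree_prod]
    rw [Finset.sum_congr rfl (fun i _ => by
      rw [show Polynomial.C ((n:ℝ)+2+i) - Polynomial.X = -(Polynomial.X - Polynomial.C ((n:ℝ)+2+i)) by ring,
        Polynomial.degree_neg, Polynomial.degree_X_sub_C])]
    simp [Finset.sum_const, Finset.card_range]
  have halt := alt_sum_poly n hn P (by rw [hdegP]; exact_mod_cast hm)
  have hPeval : ∀ k : ℕ, P.eval (k:ℝ) = ∏ i ∈ range m, ((n:ℝ) + 2 + i - k) := by
    intro k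
    rw [hP, Polynomial.eval_prod]
    exact Finset.prod_congr rfl (fun i _ => by simp)
  have key : ∀ k ∈ range (n+1), (-1:ℝ)^k * ((n-k+m+1).factorial : ℝ) /
      (((n-k).factorial : ℝ) * ((n-k+1).factorial : ℝ) * (k.factorial : ℝ))
      = (1 / (n.factorial : ℝ)) * ((-1:ℝ)^k * (n.choose k) * P.eval (k:ℝ)) := by
    intro k hk
    have hkn : k ≤ n := Nat.lt_succ_iff.mp (Finset.mem_range.mp hk)
    have hchoose : ((n.choose k : ℝ)) * (k.factorial : ℝ) * ((n-k).factorial : ℝ) = (n.factorial : ℝ) := by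
      exact_mod_cast congrArg (Nat.cast : ℕ → ℝ) (Nat.choose_mul_factorial_mul_factorial hkn)
    have hfr : ((n-k+m+1).factorial : ℝ)
        = ((n-k+1).factorial : ℝ) * ∏ i ∈ range m, ((((n-k:ℕ)):ℝ) + 2 + i) := fact_ratio (n-k) m
    have hcast : (((n-k:ℕ)):ℝ) = (n:ℝ) - k := by
      rw [Nat.cast_sub hkn]
    have hprod : (∏ i ∈ range m, ((((n-k:ℕ)):ℝ) + 2 + i)) = P.eval (k:ℝ) := by
      rw [hPeval]
      exact Finset.prod_congr rfl (fun i _ => by rw [hcast]; ring)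
    rw [hfr, hprod]
    have e1 : ((n-k).factorial : ℝ) ≠ 0 := by positivity
    have e2 : ((n-k+1).factorial : ℝ) ≠ 0 := by positivity
    have e3 : ((k).factorial : ℝ) ≠ 0 := by positivity
    have e4 : ((n).factorial : ℝ) ≠ 0 := by positivity
    field_simp
    linear_combination (-P.eval (k:ℝ)) * hchoose
  rw [Finset.sum_congr rfl key, ← Finset.mul_sum, halt, mul_zero]

noncomputable def jgc (n k : ℕ) : ℝ :=
  (-1)^k * ((n+1).factorial : ℝ)^2 /
    (((k+1).factorial : ℝ) * ((n-k).factorial : ℝ) * ((n-k+1).factorial : ℝ) * (k.factorial : ℝ))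

noncomputable def jfun (n : ℕ) (x : ℝ) : ℝ := ∑ k ∈ range (n+1), jgc n k * ((1-x)^k * x^(n-k))

lemma jfun_continuous (n : ℕ) : Continuous (jfun n) := by
  unfold jfun
  apply continuous_finset_sum
  intro k _
  continuity

lemma gamma_nat_add_two (k : ℕ) : Real.Gamma ((k : ℝ) + 1 + 1) = ((k+1).factorial : ℝ) := by
  have := Real.Gamma_nat_eq_factorial (k+1)
  rwa [show (((k+1) : ℕ) : ℝ) + 1 = (k:ℝ) + 1 + 1 by push_cast; ring] at this

lemma jacobi_eval (n : ℕ) (x : ℝ) : jacobiPNat n 1 1 (2*x - 1) = jfun n x := by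
  unfold jacobiPNat jfun
  rw [Finset.mul_sum]
  apply Finset.sum_congr rfl
  intro k hk
  have hkn : k ≤ n := Nat.lt_succ_iff.mp (Finset.mem_range.mp hk)
  rw [gamma_nat_add_two n, gamma_nat_add_two k, gamma_nat_add_two (n-k)]
  have h1 : (2*x - 1 - 1) ^ k = (-2)^k * (1-x)^k := by
    rw [← mul_pow]; ring_nf
  have h2 : (2*x - 1 + 1) ^ (n-k) = 2^(n-k) * x^(n-k) := by
    rw [← mul_pow]; ring_nf
  rw [h1, h2, show ((-2):ℝ)^k = (-1:ℝ)^k * 2^k by rw [← neg_one_mul, mul_pow]]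
  unfold jgc
  have e1 : ((k+1).factorial : ℝ) ≠ 0 := by positivity
  have e2 : ((n-k).factorial : ℝ) ≠ 0 := by positivity
  have e3 : ((n-k+1).factorial : ℝ) ≠ 0 := by positivity
  have e4 : ((k).factorial : ℝ) ≠ 0 := by positivity
  have e5 : (2:ℝ)^n ≠ 0 := by positivity
  have hsplit : (2:ℝ)^n = 2^k * 2^(n-k) := by
    rw [← pow_add, Nat.add_sub_cancel' hkn]
  field_simp
  rw [hsplit]
  ring

lemma orth_mono (n m : ℕ) (hn : 1 ≤ n) (hm : m < n) :
    ∫ x in (0:ℝ)..1, x * (1-x) * (x^m * jfun n x) = 0 := by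
  have point : ∀ x : ℝ, x * (1-x) * (x^m * jfun n x)
      = ∑ k ∈ range (n+1), jgc n k * (x^(n-k+m+1) * (1-x)^(k+1)) := by
    intro x
    unfold jfun
    rw [Finset.mul_sum, Finset.mul_sum]
    apply Finset.sum_congr rfl
    intro k _
    rw [show x^(n-k+m+1) = x^(n-k)*x^m*x by rw [pow_add, pow_add, pow_one], pow_succ]
    ring
  rw [intervalIntegral.integral_congr (g := fun x => ∑ k ∈ range (n+1),
      jgc n k * (x^(n-k+m+1) * (1-x)^(k+1))) (fun x _ => point x)]
  rw [intervalIntegral.integral_finset_sum (fun k _ => by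
    apply Continuous.intervalIntegrable
    continuity)]
  have step : ∀ k ∈ range (n+1),
      (∫ x in (0:ℝ)..1, jgc n k * (x^(n-k+m+1) * (1-x)^(k+1)))
      = (((n+1).factorial:ℝ)^2 / ((n+m+3).factorial:ℝ)) *
        ((-1:ℝ)^k * ((n-k+m+1).factorial : ℝ) /
          (((n-k).factorial:ℝ) * ((n-k+1).factorial:ℝ) * (k.factorial:ℝ))) := by
    intro k hk
    have hkn : k ≤ n := Nat.lt_succ_iff.mp (Finset.mem_range.mp hk)
    rw [intervalIntegral.integral_const_mul, beta_nat (k+1) (n-k+m+1),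
      show (n-k+m+1)+(k+1)+1 = n+m+3 by omega]
    unfold jgc
    have e0 : ((n+m+3).factorial : ℝ) ≠ 0 := by positivity
    have e1 : ((k+1).factorial : ℝ) ≠ 0 := by positivity
    have e2 : ((n-k).factorial : ℝ) ≠ 0 := by positivity
    have e3 : ((n-k+1).factorial : ℝ) ≠ 0 := by positivity
    have e4 : ((k).factorial : ℝ) ≠ 0 := by positivity
    field_simp
  rw [Finset.sum_congr rfl step, ← Finset.mul_sum, comb_zero n m hn hm, mul_zero]

lemma orth_poly (n : ℕ) (hn : 1 ≤ n) (q : Polynomial ℝ) (hq : q.natDegree < n) :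
    ∫ x in (0:ℝ)..1, x * (1-x) * (q.eval x * jfun n x) = 0 := by
  have point : ∀ x : ℝ, x * (1-x) * (q.eval x * jfun n x)
      = ∑ m ∈ range n, q.coeff m * (x * (1-x) * (x^m * jfun n x)) := by
    intro x
    rw [Polynomial.eval_eq_sum_range' hq x, Finset.sum_mul, Finset.mul_sum]
    apply Finset.sum_congr rfl
    intro m _
    ring
  rw [intervalIntegral.integral_congr (g := fun x => ∑ m ∈ range n,
      q.coeff m * (x * (1-x) * (x^m * jfun n x))) (fun x _ => point x)]
  have hint : ∀ m ∈ range n, IntervalIntegrable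
      (fun x : ℝ => q.coeff m * (x * (1-x) * (x^m * jfun n x))) MeasureTheory.volume 0 1 := by
    intro m _
    have hc : Continuous (fun x : ℝ => q.coeff m * (x * (1-x) * (x^m * jfun n x))) :=
      continuous_const.mul
        (((continuous_id.mul (continuous_const.sub continuous_id))).mul
          ((continuous_pow m).mul (jfun_continuous n)))
    exact hc.intervalIntegrable _ _
  rw [intervalIntegral.integral_finset_sum hint]
  have hz : ∀ m ∈ range n, (∫ x in (0:ℝ)..1, q.coeff m * (x * (1-x) * (x^m * jfun n x))) = 0 := by
    intro m hm
    rw [intervalIntegral.integral_const_mul, orth_mono n m hn (Finset.mem_range.mp hm), mul_zero]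
  rw [Finset.sum_congr rfl hz, Finset.sum_const_zero]


noncomputable def Qpoly (n : ℕ) : Polynomial ℝ :=
  ∑ k ∈ range (n+1), Polynomial.C (jgc n k) * (1 - Polynomial.X)^k * Polynomial.X^(n-k)

lemma Qpoly_eval (n : ℕ) (x : ℝ) : (Qpoly n).eval x = jfun n x := by
  unfold Qpoly jfun
  rw [Polynomial.eval_finset_sum]
  exact Finset.sum_congr rfl (fun k _ => by simp [mul_assoc])

lemma one_sub_X_pow_coeff (k : ℕ) :
    ((1 - Polynomial.X : Polynomial ℝ)^k).coeff k = (-1)^k := by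
  have h : (1 - Polynomial.X : Polynomial ℝ) = -(Polynomial.X - Polynomial.C 1) := by
    rw [Polynomial.C_1]; ring
  have hC : ((-1 : Polynomial ℝ))^k = Polynomial.C ((-1:ℝ)^k) := by
    rw [← Polynomial.C_1, ← Polynomial.C_neg, ← Polynomial.C_pow]
  have hm : ((Polynomial.X - Polynomial.C (1:ℝ))^k).natDegree = k := by
    rw [Polynomial.natDegree_pow, Polynomial.natDegree_X_sub_C, mul_one]
  rw [h, neg_pow, hC, Polynomial.coeff_C_mul]
  have := ((Polynomial.monic_X_sub_C (1:ℝ)).pow k).coeff_natDegree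
  rw [hm] at this
  rw [this, mul_one]

lemma Qpoly_coeff_pos (n : ℕ) : 0 < (Qpoly n).coeff n := by
  unfold Qpoly
  rw [Polynomial.finset_sum_coeff]
  have hterm : ∀ k ∈ range (n+1),
      (Polynomial.C (jgc n k) * (1 - Polynomial.X)^k * Polynomial.X^(n-k)).coeff n
      = jgc n k * (-1)^k := by
    intro k hk
    have hkn : k ≤ n := Nat.lt_succ_iff.mp (Finset.mem_range.mp hk)
    rw [Polynomial.coeff_mul_X_pow', if_pos (by omega : n - k ≤ n),
      show n - (n - k) = k by omega, Polynomial.coeff_C_mul, one_sub_X_pow_coeff]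
  rw [Finset.sum_congr rfl hterm]
  apply Finset.sum_pos
  · intro k _
    have key : jgc n k * (-1)^k = ((n+1).factorial:ℝ)^2 /
        (((k+1).factorial : ℝ) * ((n-k).factorial : ℝ) * ((n-k+1).factorial : ℝ) * (k.factorial : ℝ)) := by
      unfold jgc
      rcases Nat.even_or_odd k with h | h
      · rw [h.neg_one_pow]; ring
      · rw [h.neg_one_pow]; ring
    rw [key]
    positivity
  · exact Finset.nonempty_range_add_one

lemma Qpoly_natDegree_le (n : ℕ) : (Qpoly n).natDegree ≤ n := by
  unfold Qpoly
  apply Polynomial.natDegree_sum_le_of_forall_le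
  intro k hk
  have hkn : k ≤ n := Nat.lt_succ_iff.mp (Finset.mem_range.mp hk)
  refine le_trans (Polynomial.natDegree_mul_le) ?_
  have h1 : (Polynomial.C (jgc n k) * (1 - Polynomial.X : Polynomial ℝ)^k).natDegree ≤ k := by
    refine le_trans (Polynomial.natDegree_mul_le) ?_
    have h2 : ((1 - Polynomial.X : Polynomial ℝ)^k).natDegree ≤ k := by
      refine le_trans (Polynomial.natDegree_pow_le) ?_
      have : (1 - Polynomial.X : Polynomial ℝ).natDegree = 1 := by
        rw [show (1 - Polynomial.X : Polynomial ℝ) = -(Polynomial.X - Polynomial.C 1) by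
          rw [Polynomial.C_1]; ring, Polynomial.natDegree_neg, Polynomial.natDegree_X_sub_C]
      rw [this, mul_one]
    simpa [Polynomial.natDegree_C] using h2
  have h3 : (Polynomial.X ^ (n-k) : Polynomial ℝ).natDegree = n - k := Polynomial.natDegree_X_pow _
  omega

end QuadratureAux

/-- the Jacobi--Gauss quadrature rule on `[0,1]` with weight `x(1−x)` based on
the `n` shifted Jacobi--Gauss nodes is exact for polynomials of degree at most `2n−1`. -/
theorem jacobi_gauss_quadrature_exact (n : ℕ) (hn : 1 ≤ n) (ξh : Fin n → ℝ)
    (hξmem : ∀ i, ξh i ∈ Set.Ioo (0 : ℝ) 1)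
    (hξinj : Function.Injective ξh)
    (hξroot : ∀ i, jacobiPNat n 1 1 (2 * ξh i - 1) = 0)
    (ℓ : Fin n → ℝ → ℝ)
    (hℓ : ∀ j x, ℓ j x = ∏ k ∈ Finset.univ.erase j, (x - ξh k) / (ξh j - ξh k))
    (w : Fin n → ℝ) (hw : ∀ j, w j = ∫ x in (0:ℝ)..1, x * (1 - x) * ℓ j x)
    (p : Polynomial ℝ) (hp : p.degree ≤ (2 * n - 1 : ℕ)) :
    ∫ x in (0:ℝ)..1, x * (1 - x) * p.eval x = ∑ j, w j * p.eval (ξh j) := by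
  classical
  set pB : Polynomial ℝ := ∏ i ∈ (Finset.univ : Finset (Fin n)), (Polynomial.X - Polynomial.C (ξh i)) with hpBdef
  have hpBmonic : pB.Monic := Polynomial.monic_prod_of_monic _ _ (fun i _ => Polynomial.monic_X_sub_C _)
  have hpBdeg : pB.natDegree = n := by
    rw [hpBdef, Polynomial.natDegree_prod _ _ (fun i _ => Polynomial.X_sub_C_ne_zero _)]
    simp [Polynomial.natDegree_X_sub_C]
  have hpBeval0 : ∀ i, pB.eval (ξh i) = 0 := by
    intro i
    rw [hpBdef, Polynomial.eval_prod]
    exact Finset.prod_eq_zero (Finset.mem_univ i) (by simp)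
  set cn : ℝ := (Qpoly n).coeff n with hcndef
  have hcn : 0 < cn := Qpoly_coeff_pos n
  have hQeval0 : ∀ i, (Qpoly n).eval (ξh i) = 0 := by
    intro i
    rw [Qpoly_eval, ← jacobi_eval, hξroot i]
  have hR : Qpoly n - Polynomial.C cn * pB = 0 := by
    apply Polynomial.eq_zero_of_degree_lt_of_eval_index_eq_zero (v := ξh) Finset.univ hξinj.injOn
    · rw [Finset.card_univ, Fintype.card_fin]
      rw [Polynomial.degree_lt_iff_coeff_zero]
      intro m hm
      have hm' : n ≤ m := by exact_mod_cast hm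
      rw [Polynomial.coeff_sub, Polynomial.coeff_C_mul]
      rcases eq_or_lt_of_le hm' with rfl | hlt
      · have hpBc : pB.coeff n = 1 := by
          conv_lhs => rw [← hpBdeg]
          exact hpBmonic.coeff_natDegree
        rw [hpBc, mul_one, ← hcndef, sub_self]
      · rw [Polynomial.coeff_eq_zero_of_natDegree_lt (lt_of_le_of_lt (Qpoly_natDegree_le n) hlt),
          Polynomial.coeff_eq_zero_of_natDegree_lt (by rw [hpBdeg]; exact hlt), mul_zero, sub_zero]
    · intro i _
      rw [Polynomial.eval_sub, Polynomial.eval_mul, Polynomial.eval_C, hQeval0 i, hpBeval0 i,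
        mul_zero, sub_zero]
  have hpBjfun : ∀ x : ℝ, pB.eval x = cn⁻¹ * jfun n x := by
    intro x
    have h1 : (Qpoly n).eval x = cn * pB.eval x := by
      rw [sub_eq_zero.mp hR, Polynomial.eval_mul, Polynomial.eval_C]
    rw [← Qpoly_eval n x, h1, inv_mul_cancel_left₀ (ne_of_gt hcn)]
  set r : Polynomial ℝ := p %ₘ pB with hrdef
  set q : Polynomial ℝ := p /ₘ pB with hqdef
  have hdecomp : ∀ x : ℝ, p.eval x = pB.eval x * q.eval x + r.eval x := by
    intro x
    conv_lhs => rw [← Polynomial.modByMonic_add_div p pB]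
    rw [Polynomial.eval_add, Polynomial.eval_mul]
    ring
  have hrdeg : r.degree < (n : ℕ) := by
    have := Polynomial.degree_modByMonic_lt p hpBmonic
    rwa [Polynomial.degree_eq_natDegree (hpBmonic.ne_zero), hpBdeg] at this
  have hqdeg : q.natDegree < n := by
    have hpnd : p.natDegree ≤ 2*n - 1 := Polynomial.natDegree_le_iff_degree_le.mpr hp
    rw [hqdef, Polynomial.natDegree_divByMonic p hpBmonic, hpBdeg]
    omega
  have hint1 : IntervalIntegrable (fun x : ℝ => x * (1-x) * (pB.eval x * q.eval x))
      MeasureTheory.volume 0 1 :=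
    (((continuous_id.mul (continuous_const.sub continuous_id)).mul
      (pB.continuous.mul q.continuous)).intervalIntegrable _ _)
  have hint2 : IntervalIntegrable (fun x : ℝ => x * (1-x) * r.eval x)
      MeasureTheory.volume 0 1 :=
    (((continuous_id.mul (continuous_const.sub continuous_id)).mul
      r.continuous).intervalIntegrable _ _)
  have hsplit : (∫ x in (0:ℝ)..1, x * (1-x) * p.eval x)
      = (∫ x in (0:ℝ)..1, x * (1-x) * (pB.eval x * q.eval x))
        + ∫ x in (0:ℝ)..1, x * (1-x) * r.eval x := by
    rw [← intervalIntegral.integral_add hint1 hint2]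
    apply intervalIntegral.integral_congr
    intro x _
    show x * (1 - x) * p.eval x
      = x * (1-x) * (pB.eval x * q.eval x) + x * (1-x) * r.eval x
    rw [hdecomp x]
    ring
  have hI1 : (∫ x in (0:ℝ)..1, x * (1-x) * (pB.eval x * q.eval x)) = 0 := by
    have hpt : ∀ x : ℝ, x * (1-x) * (pB.eval x * q.eval x)
        = cn⁻¹ * (x * (1-x) * (q.eval x * jfun n x)) := by
      intro x; rw [hpBjfun x]; ring
    rw [intervalIntegral.integral_congr
        (g := fun x => cn⁻¹ * (x * (1-x) * (q.eval x * jfun n x))) (fun x _ => hpt x),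
      intervalIntegral.integral_const_mul, orth_poly n hn q hqdeg, mul_zero]
  have hinj : Set.InjOn ξh (Finset.univ : Finset (Fin n)) := hξinj.injOn
  have hrinterp : r = Lagrange.interpolate Finset.univ ξh (fun i => r.eval (ξh i)) :=
    (Lagrange.eq_interpolate (f := r) hinj (by
      rw [Finset.card_univ, Fintype.card_fin]; exact_mod_cast hrdeg))
  have hbasis : ∀ (i : Fin n) (x : ℝ), (Lagrange.basis Finset.univ ξh i).eval x = ℓ i x := by
    intro i x
    rw [Lagrange.basis, Polynomial.eval_prod, hℓ]
    apply Finset.prod_congr rfl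
    intro k _
    simp only [Lagrange.basisDivisor, Polynomial.eval_mul, Polynomial.eval_C,
      Polynomial.eval_sub, Polynomial.eval_X]
    rw [div_eq_mul_inv]
    ring
  have hreval : ∀ x : ℝ, r.eval x = ∑ i, r.eval (ξh i) * ℓ i x := by
    intro x
    conv_lhs => rw [hrinterp]
    rw [Lagrange.interpolate_apply, Polynomial.eval_finset_sum]
    apply Finset.sum_congr rfl
    intro i _
    rw [Polynomial.eval_mul, Polynomial.eval_C, hbasis]
  have hℓcont : ∀ i : Fin n, Continuous (ℓ i) := by
    intro i
    have := (Lagrange.basis Finset.univ ξh i).continuous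
    exact this.congr (fun x => hbasis i x)
  have hint3 : ∀ i : Fin n, IntervalIntegrable
      (fun x : ℝ => r.eval (ξh i) * (x * (1-x) * ℓ i x)) MeasureTheory.volume 0 1 := by
    intro i
    have hc : Continuous (fun x : ℝ => r.eval (ξh i) * (x * (1-x) * ℓ i x)) :=
      continuous_const.mul ((continuous_id.mul (continuous_const.sub continuous_id)).mul
        (hℓcont i))
    exact hc.intervalIntegrable _ _
  have hI2 : (∫ x in (0:ℝ)..1, x * (1-x) * r.eval x) = ∑ i, r.eval (ξh i) * w i := by
    have hpt : ∀ x : ℝ, x * (1-x) * r.eval x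
        = ∑ i, r.eval (ξh i) * (x * (1-x) * ℓ i x) := by
      intro x
      rw [hreval x, Finset.mul_sum]
      apply Finset.sum_congr rfl
      intro i _
      ring
    rw [intervalIntegral.integral_congr
        (g := fun x => ∑ i, r.eval (ξh i) * (x * (1-x) * ℓ i x)) (fun x _ => hpt x),
      intervalIntegral.integral_finset_sum (fun (i : Fin n) _ => hint3 i)]
    apply Finset.sum_congr rfl
    intro i _
    rw [intervalIntegral.integral_const_mul, hw i]
  rw [hsplit, hI1, zero_add, hI2]
  apply Finset.sum_congr rfl
  intro j _
  rw [show p.eval (ξh j) = r.eval (ξh j) by rw [hdecomp (ξh j), hpBeval0 j, zero_mul, zero_add],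
    mul_comm]
end
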